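/- The classical lattice potential KdV equation is consistent around the cube: if u_{[ij]} = u + 2(p_i+p_j)(u_{[i]} − u_{[j]})/(2(p_j−p_i) + u_{[i]} − u_{[j]}) for all pairs i≠j among {1,2,3}, and u_{[ijl]} = u_{[l]} + 2(p_i+p_j)(u_{[il]} − u_{[jl]})/(2(p_j−p_i) + u_{[il]} − u_{[jl]}), then u_{[123]} = u_{[231]} = u_{[312]}, all denominators being assumed nonzero. -/

import Mathlib

/-- The classical lattice potential KdV equation is consistent around
the cube: with face values `u_{[ij]}` and triple values `u_{[ijl]}` defined by the
lpKdV quad equation (all denominators nonzero), one has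
`u_{[123]} = u_{[231]} = u_{[312]}`. -/
theorem lpkdv_consistency_around_the_cube
    {K : Type*} [Field K] [CharZero K]
    (p1 p2 p3 u u1 u2 u3 : K)
    (u12 u21 u13 u31 u23 u32 u123 u231 u312 : K)
    (h12 : 2*(p2 - p1) + u1 - u2 ≠ 0)
    (h21 : 2*(p1 - p2) + u2 - u1 ≠ 0)
    (h13 : 2*(p3 - p1) + u1 - u3 ≠ 0)
    (h31 : 2*(p1 - p3) + u3 - u1 ≠ 0)
    (h23 : 2*(p3 - p2) + u2 - u3 ≠ 0)
    (h32 : 2*(p2 - p3) + u3 - u2 ≠ 0)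
    (e12 : u12 = u + 2*(p1 + p2)*(u1 - u2)/(2*(p2 - p1) + u1 - u2))
    (e21 : u21 = u + 2*(p2 + p1)*(u2 - u1)/(2*(p1 - p2) + u2 - u1))
    (e13 : u13 = u + 2*(p1 + p3)*(u1 - u3)/(2*(p3 - p1) + u1 - u3))
    (e31 : u31 = u + 2*(p3 + p1)*(u3 - u1)/(2*(p1 - p3) + u3 - u1))
    (e23 : u23 = u + 2*(p2 + p3)*(u2 - u3)/(2*(p3 - p2) + u2 - u3))
    (e32 : u32 = u + 2*(p3 + p2)*(u3 - u2)/(2*(p2 - p3) + u3 - u2))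
    (h123 : 2*(p2 - p1) + u13 - u23 ≠ 0)
    (h231 : 2*(p3 - p2) + u21 - u31 ≠ 0)
    (h312 : 2*(p1 - p3) + u32 - u12 ≠ 0)
    (e123 : u123 = u3 + 2*(p1 + p2)*(u13 - u23)/(2*(p2 - p1) + u13 - u23))
    (e231 : u231 = u1 + 2*(p2 + p3)*(u21 - u31)/(2*(p3 - p2) + u21 - u31))
    (e312 : u312 = u2 + 2*(p3 + p1)*(u32 - u12)/(2*(p1 - p3) + u32 - u12)) :
    u123 = u231 ∧ u231 = u312 := by
  have hd13 : (2*(p3 - p1) + u1 - u3) * (2*(p3 - p2) + u2 - u3) ≠ 0 := mul_ne_zero h13 h23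
  have hd21 : (2*(p1 - p2) + u2 - u1) * (2*(p1 - p3) + u3 - u1) ≠ 0 := mul_ne_zero h21 h31
  have hd32 : (2*(p2 - p3) + u3 - u2) * (2*(p2 - p1) + u1 - u2) ≠ 0 := mul_ne_zero h32 h12
  -- flatten the second-level denominators
  have f1 : 2*(p2 - p1) + u13 - u23 =
      (2*(p2 - p1)*((2*(p3 - p1) + u1 - u3) * (2*(p3 - p2) + u2 - u3))
        + (2*(p1 + p3)*(u1 - u3)*(2*(p3 - p2) + u2 - u3)
          - 2*(p2 + p3)*(u2 - u3)*(2*(p3 - p1) + u1 - u3)))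
      / ((2*(p3 - p1) + u1 - u3) * (2*(p3 - p2) + u2 - u3)) := by
    rw [e13, e23]; field_simp; ring
  have f2 : 2*(p3 - p2) + u21 - u31 =
      (2*(p3 - p2)*((2*(p1 - p2) + u2 - u1) * (2*(p1 - p3) + u3 - u1))
        + (2*(p2 + p1)*(u2 - u1)*(2*(p1 - p3) + u3 - u1)
          - 2*(p3 + p1)*(u3 - u1)*(2*(p1 - p2) + u2 - u1)))
      / ((2*(p1 - p2) + u2 - u1) * (2*(p1 - p3) + u3 - u1)) := by
    rw [e21, e31]; field_simp; ring
  have f3 : 2*(p1 - p3) + u32 - u12 =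
      (2*(p1 - p3)*((2*(p2 - p3) + u3 - u2) * (2*(p2 - p1) + u1 - u2))
        + (2*(p3 + p2)*(u3 - u2)*(2*(p2 - p1) + u1 - u2)
          - 2*(p1 + p2)*(u1 - u2)*(2*(p2 - p3) + u3 - u2)))
      / ((2*(p2 - p3) + u3 - u2) * (2*(p2 - p1) + u1 - u2)) := by
    rw [e32, e12]; field_simp; ring
  have hM1 : (2*(p2 - p1)*((2*(p3 - p1) + u1 - u3) * (2*(p3 - p2) + u2 - u3))
        + (2*(p1 + p3)*(u1 - u3)*(2*(p3 - p2) + u2 - u3)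
          - 2*(p2 + p3)*(u2 - u3)*(2*(p3 - p1) + u1 - u3))) ≠ 0 := by
    intro h; rw [f1, h, zero_div] at h123; exact h123 rfl
  have hM2 : (2*(p3 - p2)*((2*(p1 - p2) + u2 - u1) * (2*(p1 - p3) + u3 - u1))
        + (2*(p2 + p1)*(u2 - u1)*(2*(p1 - p3) + u3 - u1)
          - 2*(p3 + p1)*(u3 - u1)*(2*(p1 - p2) + u2 - u1))) ≠ 0 := by
    intro h; rw [f2, h, zero_div] at h231; exact h231 rfl
  have hM3 : (2*(p1 - p3)*((2*(p2 - p3) + u3 - u2) * (2*(p2 - p1) + u1 - u2))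
        + (2*(p3 + p2)*(u3 - u2)*(2*(p2 - p1) + u1 - u2)
          - 2*(p1 + p2)*(u1 - u2)*(2*(p2 - p3) + u3 - u2))) ≠ 0 := by
    intro h; rw [f3, h, zero_div] at h312; exact h312 rfl
  -- flat formulas for the triple values
  have g1 : u123 = u3 + 2*(p1 + p2)*
      (2*(p1 + p3)*(u1 - u3)*(2*(p3 - p2) + u2 - u3)
        - 2*(p2 + p3)*(u2 - u3)*(2*(p3 - p1) + u1 - u3))
      / (2*(p2 - p1)*((2*(p3 - p1) + u1 - u3) * (2*(p3 - p2) + u2 - u3))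
        + (2*(p1 + p3)*(u1 - u3)*(2*(p3 - p2) + u2 - u3)
          - 2*(p2 + p3)*(u2 - u3)*(2*(p3 - p1) + u1 - u3))) := by
    rw [e123, f1, e13, e23]; field_simp
    all_goals first | ring1 | (left; ring1)
  have g2 : u231 = u1 + 2*(p2 + p3)*
      (2*(p2 + p1)*(u2 - u1)*(2*(p1 - p3) + u3 - u1)
        - 2*(p3 + p1)*(u3 - u1)*(2*(p1 - p2) + u2 - u1))
      / (2*(p3 - p2)*((2*(p1 - p2) + u2 - u1) * (2*(p1 - p3) + u3 - u1))
        + (2*(p2 + p1)*(u2 - u1)*(2*(p1 - p3) + u3 - u1)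
          - 2*(p3 + p1)*(u3 - u1)*(2*(p1 - p2) + u2 - u1))) := by
    rw [e231, f2, e21, e31]; field_simp
    all_goals first | ring1 | (left; ring1)
  have g3 : u312 = u2 + 2*(p3 + p1)*
      (2*(p3 + p2)*(u3 - u2)*(2*(p2 - p1) + u1 - u2)
        - 2*(p1 + p2)*(u1 - u2)*(2*(p2 - p3) + u3 - u2))
      / (2*(p1 - p3)*((2*(p2 - p3) + u3 - u2) * (2*(p2 - p1) + u1 - u2))
        + (2*(p3 + p2)*(u3 - u2)*(2*(p2 - p1) + u1 - u2)
          - 2*(p1 + p2)*(u1 - u2)*(2*(p2 - p3) + u3 - u2))) := by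
    rw [e312, f3, e32, e12]; field_simp
    all_goals first | ring1 | (left; ring1)
  constructor
  · rw [g1, g2, add_div' _ _ _ hM1, add_div' _ _ _ hM2, div_eq_div_iff hM1 hM2]; ring
  · rw [g2, g3, add_div' _ _ _ hM2, add_div' _ _ _ hM3, div_eq_div_iff hM2 hM3]; ring
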